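/- Let γ > 0, κ > 0, τ > 0, and let L be a real m × m matrix with ‖exp(t L_κ)‖_∞ ≤ e^{−κt} for all t ≥ 0, where L_κ = L − κI. Let N : ℝ^m → ℝ^m satisfy ‖N(w)‖ ≤ κγ whenever ‖w‖ ≤ γ. Let s ≥ 1, let a_{ij} ≥ 0 for 1 ≤ i ≤ s, 0 ≤ j ≤ i−1, and set c₀ = 0 and c_i = Σ_{j=0}^{i−1} a_{ij} with c_s = 1. Assume (i) 0 = c₀ ≤ c₁ ≤ ⋯ ≤ c_s = 1, and (ii) for each i = 1,…,s the function g_i(x) = e^{−c_i x} + x Σ_{j=0}^{i−1} a_{ij} e^{−(c_i−c_j)x} is nonincreasing on [0, ∞). Define the sIFRK stages by u^{(0)} = uⁿ and u^{(i)} = exp(c_i τ L_κ) uⁿ + τ Σ_{j=0}^{i−1} a_{ij} exp((c_i − c_j) τ L_κ) N(u^{(j)}) for 1 ≤ i ≤ s, and set u^{n+1} = u^{(s)}. Then if ‖uⁿ‖ ≤ γ, one has ‖u^{(i)}‖ ≤ γ for all 1 ≤ i ≤ s; in particular ‖u^{n+1}‖ ≤ γ for every τ > 0. -/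

import Mathlib

attribute [local instance] Matrix.linftyOpNormedRing Matrix.linftyOpNormedAlgebra

/-- Theorem 3.2: unconditional MBP preservation for the sIFRK method in Butcher form.
Under nondecreasing abscissas and nonincreasing stage functions
`gᵢ(x) = e^{−cᵢx} + x Σ_{j<i} aᵢⱼ e^{−(cᵢ−cⱼ)x}`, if `‖uⁿ‖ ≤ γ` then all stages,
in particular `u^{n+1} = u^{(s)}`, are bounded by `γ` for any `τ > 0`. -/
theorem stmt_4 (m : ℕ) (γ κ τ : ℝ) (hγ : 0 < γ) (hκ : 0 < κ) (hτ : 0 < τ)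
    (L Lκ : Matrix (Fin m) (Fin m) ℝ)
    (hLκ : Lκ = L - κ • (1 : Matrix (Fin m) (Fin m) ℝ))
    (hsemi : ∀ t : ℝ, 0 ≤ t → ‖NormedSpace.exp (t • Lκ)‖ ≤ Real.exp (-κ * t))
    (N : (Fin m → ℝ) → (Fin m → ℝ))
    (hN : ∀ w : Fin m → ℝ, ‖w‖ ≤ γ → ‖N w‖ ≤ κ * γ)
    (s : ℕ) (hs : 1 ≤ s)
    (a : ℕ → ℕ → ℝ) (c : ℕ → ℝ)
    (ha : ∀ i, 1 ≤ i → i ≤ s → ∀ j < i, 0 ≤ a i j)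
    (hc0 : c 0 = 0)
    (hci : ∀ i, 1 ≤ i → i ≤ s → c i = ∑ j ∈ Finset.range i, a i j)
    (hcs : c s = 1)
    (hmono : ∀ i < s, c i ≤ c (i + 1))
    (hg : ∀ i, 1 ≤ i → i ≤ s → ∀ x y : ℝ, 0 ≤ x → x ≤ y →
      Real.exp (-(c i) * y) + y * ∑ j ∈ Finset.range i, a i j * Real.exp (-(c i - c j) * y) ≤
        Real.exp (-(c i) * x) + x * ∑ j ∈ Finset.range i, a i j * Real.exp (-(c i - c j) * x))
    (un : Fin m → ℝ) (hun : ‖un‖ ≤ γ)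
    (u : ℕ → (Fin m → ℝ)) (hu0 : u 0 = un)
    (hu : ∀ i, 1 ≤ i → i ≤ s →
      u i = (NormedSpace.exp ((c i * τ) • Lκ)).mulVec un +
        τ • ∑ j ∈ Finset.range i,
          a i j • (NormedSpace.exp (((c i - c j) * τ) • Lκ)).mulVec (N (u j))) :
    ∀ i, 1 ≤ i → i ≤ s → ‖u i‖ ≤ γ := by
  -- monotonicity of c
  have hcmono : ∀ j i : ℕ, j ≤ i → i ≤ s → c j ≤ c i := by
    intro j i hji his
    induction i with
    | zero => interval_cases j; rfl
    | succ k ih =>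
      rcases Nat.lt_or_ge j (k+1) with h | h
      · exact le_trans (ih (Nat.lt_succ_iff.mp h) (le_trans (Nat.le_succ k) his))
          (hmono k (Nat.lt_of_succ_le his))
      · have : j = k + 1 := le_antisymm hji h
        simp [this]
  have hcnn : ∀ i : ℕ, i ≤ s → 0 ≤ c i := by
    intro i his
    have := hcmono 0 i (Nat.zero_le i) his
    rwa [hc0] at this
  -- main claim by strong induction, including i = 0
  have key : ∀ i : ℕ, i ≤ s → ‖u i‖ ≤ γ := by
    intro i
    induction i using Nat.strong_induction_on with
    | _ i ih =>
      intro his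
      rcases Nat.eq_zero_or_pos i with rfl | hi1
      · rw [hu0]; exact hun
      rw [hu i hi1 his]
      have hciτ : 0 ≤ c i * τ := mul_nonneg (hcnn i his) hτ.le
      -- bound on first term
      have h1 : ‖(NormedSpace.exp ((c i * τ) • Lκ)).mulVec un‖ ≤
          Real.exp (-(c i) * (κ * τ)) * γ := by
        calc ‖(NormedSpace.exp ((c i * τ) • Lκ)).mulVec un‖
            ≤ ‖NormedSpace.exp ((c i * τ) • Lκ)‖ * ‖un‖ :=
              Matrix.linfty_opNorm_mulVec _ _
          _ ≤ Real.exp (-κ * (c i * τ)) * γ :=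
              mul_le_mul (hsemi _ hciτ) hun (norm_nonneg _) (Real.exp_nonneg _)
          _ = Real.exp (-(c i) * (κ * τ)) * γ := by ring_nf
      -- bound on each summand
      have hterm : ∀ j ∈ Finset.range i,
          ‖a i j • (NormedSpace.exp (((c i - c j) * τ) • Lκ)).mulVec (N (u j))‖ ≤
            a i j * (Real.exp (-(c i - c j) * (κ * τ)) * (κ * γ)) := by
        intro j hj
        rw [Finset.mem_range] at hj
        have haij := ha i hi1 his j hj
        have hcij : 0 ≤ (c i - c j) * τ := by
          have := hcmono j i hj.le his
          have : 0 ≤ c i - c j := by linarith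
          positivity
        have hNj : ‖N (u j)‖ ≤ κ * γ :=
          hN _ (ih j (lt_of_lt_of_le hj (le_refl i)) (le_trans hj.le his))
        calc ‖a i j • (NormedSpace.exp (((c i - c j) * τ) • Lκ)).mulVec (N (u j))‖
            = a i j * ‖(NormedSpace.exp (((c i - c j) * τ) • Lκ)).mulVec (N (u j))‖ := by
              rw [norm_smul, Real.norm_of_nonneg haij]
          _ ≤ a i j * (‖NormedSpace.exp (((c i - c j) * τ) • Lκ)‖ * ‖N (u j)‖) := by
              exact mul_le_mul_of_nonneg_left (Matrix.linfty_opNorm_mulVec _ _) haij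
          _ ≤ a i j * (Real.exp (-κ * ((c i - c j) * τ)) * (κ * γ)) := by
              apply mul_le_mul_of_nonneg_left _ haij
              exact mul_le_mul (hsemi _ hcij) hNj (norm_nonneg _) (Real.exp_nonneg _)
          _ = a i j * (Real.exp (-(c i - c j) * (κ * τ)) * (κ * γ)) := by ring_nf
      -- combine
      have h2 : ‖τ • ∑ j ∈ Finset.range i,
          a i j • (NormedSpace.exp (((c i - c j) * τ) • Lκ)).mulVec (N (u j))‖ ≤
          τ * ∑ j ∈ Finset.range i,
            a i j * (Real.exp (-(c i - c j) * (κ * τ)) * (κ * γ)) := by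
        rw [norm_smul, Real.norm_of_nonneg hτ.le]
        exact mul_le_mul_of_nonneg_left
          ((norm_sum_le _ _).trans (Finset.sum_le_sum hterm)) hτ.le
      have hgi := hg i hi1 his 0 (κ * τ) le_rfl (by positivity)
      simp only [neg_zero, zero_mul, mul_zero, Real.exp_zero, zero_add] at hgi
      have hsum :
          τ * ∑ j ∈ Finset.range i,
            a i j * (Real.exp (-(c i - c j) * (κ * τ)) * (κ * γ)) =
          γ * ((κ * τ) * ∑ j ∈ Finset.range i,
            a i j * Real.exp (-(c i - c j) * (κ * τ))) := by
        rw [Finset.mul_sum, Finset.mul_sum, Finset.mul_sum]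
        apply Finset.sum_congr rfl
        intro j _
        ring
      calc ‖(NormedSpace.exp ((c i * τ) • Lκ)).mulVec un +
            τ • ∑ j ∈ Finset.range i,
              a i j • (NormedSpace.exp (((c i - c j) * τ) • Lκ)).mulVec (N (u j))‖
          ≤ ‖(NormedSpace.exp ((c i * τ) • Lκ)).mulVec un‖ +
            ‖τ • ∑ j ∈ Finset.range i,
              a i j • (NormedSpace.exp (((c i - c j) * τ) • Lκ)).mulVec (N (u j))‖ :=
            norm_add_le _ _
        _ ≤ Real.exp (-(c i) * (κ * τ)) * γ +
            γ * ((κ * τ) * ∑ j ∈ Finset.range i,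
              a i j * Real.exp (-(c i - c j) * (κ * τ))) := by
            rw [← hsum]; exact add_le_add h1 h2
        _ = γ * (Real.exp (-(c i) * (κ * τ)) + (κ * τ) * ∑ j ∈ Finset.range i,
              a i j * Real.exp (-(c i - c j) * (κ * τ))) := by ring
        _ ≤ γ * 1 := by nlinarith [hgi]
        _ = γ := mul_one γ
  intro i hi1 his
  exact key i his
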